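/- Let n ≥ 1 and let α ∈ (0,1) be a constant. Let d₀, d₁: ℝ^n × ℝ → [0,1] be jointly Borel measurable estimators of F, and let d₀*(Y;t) = Σ_{i=0}^n ((i+1)/(n+2))·1{Y_i ≤ t < Y_{i+1}} be the best invariant estimator under integrated squared error L₀(d,F) = ∫_ℝ (d(t) − F(t))² dF(t), with risk R₀(d,F) = E_F[L₀(d(X;·),F)]. Define the balanced risk R_{α,d₀}(d,F) = E_F[∫_ℝ { α·(d − d₀)² + (1−α)·(d − F(t))² } dF(t)]. Then for every continuous cumulative distribution function F, R_{α,d₀}(α·d₀ + (1−α)·d₀*, F) − R_{α,d₀}(α·d₀ + (1−α)·d₁, F) = (1−α)²·( R₀(d₀*,F) − R₀(d₁,F) ). In particular, if R₀(d₁,F) ≤ R₀(d₀*,F) for all continuous F with strict inequality for some F, then α·d₀ + (1−α)·d₁ dominates α·d₀ + (1−α)·d₀* under the balanced risk R_{α,d₀}. -/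
import Mathlib


open MeasureTheory Set
open scoped ENNReal NNReal

noncomputable section

/-- Number of sample points `x j ≤ t`, as an element of `Fin (n+1)`.
Note `countLE x t = i` iff `Y_i ≤ t < Y_{i+1}` where `Y_1 ≤ … ≤ Y_n` are the
order statistics of `x` and `Y_0 = -∞`, `Y_{n+1} = +∞`. -/
def countLE {n : ℕ} (x : Fin n → ℝ) (t : ℝ) : Fin (n + 1) :=
  ⟨(Finset.univ.filter (fun j => x j ≤ t)).card,
    Nat.lt_succ_of_le ((Finset.card_filter_le _ _).trans (by simp))⟩

/-- The invariant estimator `d(Y;t) = Σ_{i=0}^n u_i · 1{Y_i ≤ t < Y_{i+1}}`. -/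
def invEst {n : ℕ} (u : Fin (n + 1) → ℝ) : (Fin n → ℝ) → ℝ → ℝ :=
  fun x t => u (countLE x t)

/-- The cumulative distribution function of `μ`. -/
def cdfOf (μ : Measure ℝ) (t : ℝ) : ℝ := (μ (Set.Iic t)).toReal

/-- Distribution of an i.i.d. sample of size `n` from `μ`. -/
def sampleMeasure (n : ℕ) (μ : Measure ℝ) : Measure (Fin n → ℝ) :=
  Measure.pi fun _ => μ

/-- `(n+1)·C(n,i)·t^i·(1−t)^{n−i}`, the `Beta(i+1, n−i+1)` density on `(0,1)`. -/
def betaDen (n i : ℕ) (t : ℝ) : ℝ :=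
  ((n : ℝ) + 1) * (n.choose i) * t ^ i * (1 - t) ^ (n - i)


/-- Risk under integrated squared error `L₀(d,F) = ∫ (d(t) − F(t))² dF(t)`. -/
def riskSqReal {n : ℕ} (μ : Measure ℝ) (d : (Fin n → ℝ) → ℝ → ℝ) : ℝ :=
  ∫ x, (∫ t, (d x t - cdfOf μ t) ^ 2 ∂μ) ∂(sampleMeasure n μ)

/-- Balanced risk with constant weight `α` and target `d₀`:
`R_{α,d₀}(d,F) = E_F[∫ { α·(d − d₀)² + (1−α)·(d − F(t))² } dF(t)]`. -/
def riskBalC {n : ℕ} (μ : Measure ℝ) (α : ℝ)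
    (d₀ d : (Fin n → ℝ) → ℝ → ℝ) : ℝ :=
  ∫ x, (∫ t,
      (α * (d x t - d₀ x t) ^ 2 + (1 - α) * (d x t - cdfOf μ t) ^ 2) ∂μ)
    ∂(sampleMeasure n μ)

/-- Aggarwal's best invariant estimator of `F` under integrated squared error,
with weights `(i+1)/(n+2)`. -/
def aggEst (n : ℕ) : (Fin n → ℝ) → ℝ → ℝ :=
  invEst (fun i : Fin (n + 1) => ((i : ℝ) + 1) / ((n : ℝ) + 2))

section Aux

lemma cdfOf_mem_Icc (μ : Measure ℝ) [IsProbabilityMeasure μ] (t : ℝ) :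
    cdfOf μ t ∈ Set.Icc (0 : ℝ) 1 := by
  constructor
  · exact ENNReal.toReal_nonneg
  · have h : μ (Set.Iic t) ≤ 1 := prob_le_one
    calc (μ (Set.Iic t)).toReal ≤ (1 : ℝ≥0∞).toReal :=
          ENNReal.toReal_mono ENNReal.one_ne_top h
      _ = 1 := by simp

lemma sq_diff_le_one {a b : ℝ} (ha : a ∈ Set.Icc (0:ℝ) 1) (hb : b ∈ Set.Icc (0:ℝ) 1) :
    (a - b) ^ 2 ≤ 1 := by nlinarith [ha.1, ha.2, hb.1, hb.2]

lemma aggEst_meas (n : ℕ) : Measurable (Function.uncurry (aggEst n)) := by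
  have key : Function.uncurry (aggEst n) =
      fun p : (Fin n → ℝ) × ℝ =>
        ((∑ j : Fin n, if p.1 j ≤ p.2 then (1:ℝ) else 0) + 1) / ((n : ℝ) + 2) := by
    funext p
    simp only [Function.uncurry, aggEst, invEst, countLE, Finset.card_filter]
    push_cast
    rfl
  rw [key]
  apply Measurable.div _ measurable_const
  apply Measurable.add _ measurable_const
  apply Finset.measurable_sum
  intro j _
  have hm : Measurable fun a : (Fin n → ℝ) × ℝ => a.1 j :=
    (measurable_pi_apply j).comp measurable_fst
  exact Measurable.ite (measurableSet_le hm measurable_snd)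
    measurable_const measurable_const

lemma aggEst_mem_Icc (n : ℕ) (x : Fin n → ℝ) (t : ℝ) :
    aggEst n x t ∈ Set.Icc (0:ℝ) 1 := by
  simp only [aggEst, invEst]
  set i := countLE x t
  have hi : (i : ℝ) ≤ n := by
    have := i.isLt
    exact_mod_cast Nat.lt_succ_iff.mp this
  constructor
  · positivity
  · rw [div_le_one (by positivity)]
    linarith

lemma riskBal_eq {n : ℕ} (μ : Measure ℝ) [IsProbabilityMeasure μ]
    (hF : Measurable (cdfOf μ)) (α : ℝ)
    (d₀ d : (Fin n → ℝ) → ℝ → ℝ)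
    (hd₀ : Measurable (Function.uncurry d₀)) (hd : Measurable (Function.uncurry d))
    (hd₀r : ∀ x t, d₀ x t ∈ Set.Icc (0:ℝ) 1) (hdr : ∀ x t, d x t ∈ Set.Icc (0:ℝ) 1) :
    riskBalC μ α d₀ (fun x t => α * d₀ x t + (1 - α) * d x t)
      = α * (1 - α) * riskSqReal μ d₀ + (1 - α) ^ 2 * riskSqReal μ d := by
  haveI : IsProbabilityMeasure (sampleMeasure n μ) := by
    unfold sampleMeasure; infer_instance
  -- inner integrability for a general bounded measurable estimator
  have inner_int : ∀ (e : (Fin n → ℝ) → ℝ → ℝ), Measurable (Function.uncurry e) →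
      (∀ x t, e x t ∈ Set.Icc (0:ℝ) 1) →
      ∀ x, Integrable (fun t => (e x t - cdfOf μ t) ^ 2) μ := by
    intro e he her x
    have hm : Measurable fun t => (e x t - cdfOf μ t) ^ 2 :=
      ((he.comp measurable_prodMk_left).sub hF).pow_const 2
    refine (integrable_const (1:ℝ)).mono' hm.aestronglyMeasurable ?_
    filter_upwards with t
    rw [Real.norm_eq_abs, abs_of_nonneg (sq_nonneg _)]
    exact sq_diff_le_one (her x t) (cdfOf_mem_Icc μ t)
  have outer_int : ∀ (e : (Fin n → ℝ) → ℝ → ℝ), Measurable (Function.uncurry e) →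
      (∀ x t, e x t ∈ Set.Icc (0:ℝ) 1) →
      Integrable (fun x => ∫ t, (e x t - cdfOf μ t) ^ 2 ∂μ) (sampleMeasure n μ) := by
    intro e he her
    have hm : Measurable fun p : (Fin n → ℝ) × ℝ => (e p.1 p.2 - cdfOf μ p.2) ^ 2 :=
      (he.sub (hF.comp measurable_snd)).pow_const 2
    have hsm : StronglyMeasurable fun x => ∫ t, (e x t - cdfOf μ t) ^ 2 ∂μ :=
      StronglyMeasurable.integral_prod_right
        (f := fun x t => (e x t - cdfOf μ t) ^ 2) hm.stronglyMeasurable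
    refine (integrable_const (1:ℝ)).mono' hsm.aestronglyMeasurable ?_
    filter_upwards with x
    have : ‖∫ t, (e x t - cdfOf μ t) ^ 2 ∂μ‖ ≤ 1 * (μ Set.univ).toReal := by
      apply norm_integral_le_of_norm_le_const
      filter_upwards with t
      rw [Real.norm_eq_abs, abs_of_nonneg (sq_nonneg _)]
      exact sq_diff_le_one (her x t) (cdfOf_mem_Icc μ t)
    simpa using this
  have int₀ := inner_int d₀ hd₀ hd₀r
  have intd := inner_int d hd hdr
  have h1 : ∀ x, (∫ t,
      (α * ((α * d₀ x t + (1 - α) * d x t) - d₀ x t) ^ 2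
        + (1 - α) * ((α * d₀ x t + (1 - α) * d x t) - cdfOf μ t) ^ 2) ∂μ)
      = α * (1 - α) * (∫ t, (d₀ x t - cdfOf μ t) ^ 2 ∂μ)
        + (1 - α) ^ 2 * (∫ t, (d x t - cdfOf μ t) ^ 2 ∂μ) := by
    intro x
    have : (fun t => (α * ((α * d₀ x t + (1 - α) * d x t) - d₀ x t) ^ 2
        + (1 - α) * ((α * d₀ x t + (1 - α) * d x t) - cdfOf μ t) ^ 2))
        = fun t => α * (1 - α) * (d₀ x t - cdfOf μ t) ^ 2
            + (1 - α) ^ 2 * (d x t - cdfOf μ t) ^ 2 := by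
      funext t; ring
    rw [this, integral_add ((int₀ x).const_mul _) ((intd x).const_mul _),
      integral_const_mul, integral_const_mul]
  unfold riskBalC riskSqReal
  calc (∫ x, (∫ t,
        (α * ((α * d₀ x t + (1 - α) * d x t) - d₀ x t) ^ 2
          + (1 - α) * ((α * d₀ x t + (1 - α) * d x t) - cdfOf μ t) ^ 2) ∂μ)
        ∂(sampleMeasure n μ))
      = ∫ x, (α * (1 - α) * (∫ t, (d₀ x t - cdfOf μ t) ^ 2 ∂μ)
          + (1 - α) ^ 2 * (∫ t, (d x t - cdfOf μ t) ^ 2 ∂μ)) ∂(sampleMeasure n μ) := by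
        exact integral_congr_ae (Filter.Eventually.of_forall h1)
    _ = α * (1 - α) * (∫ x, (∫ t, (d₀ x t - cdfOf μ t) ^ 2 ∂μ) ∂(sampleMeasure n μ))
        + (1 - α) ^ 2 * (∫ x, (∫ t, (d x t - cdfOf μ t) ^ 2 ∂μ) ∂(sampleMeasure n μ)) := by
        rw [integral_add ((outer_int d₀ hd₀ hd₀r).const_mul _)
          ((outer_int d hd hdr).const_mul _), integral_const_mul, integral_const_mul]

end Aux

/-- with constant weight `α ∈ (0,1)`, target `d₀`, and
`d₀*` the best invariant estimator under integrated squared error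
(weights `(i+1)/(n+2)`), the balanced risk difference identity
`R_{α,d₀}(αd₀+(1−α)d₀*) − R_{α,d₀}(αd₀+(1−α)d₁) = (1−α)²(R₀(d₀*) − R₀(d₁))`
holds; in particular if `d₁` dominates `d₀*` under `R₀`, then
`αd₀+(1−α)d₁` dominates `αd₀+(1−α)d₀*` under `R_{α,d₀}`. -/
theorem balanced_dominance
    {n : ℕ} (hn : 1 ≤ n)
    (α : ℝ) (hα : α ∈ Set.Ioo (0 : ℝ) 1)
    (d₀ d₁ : (Fin n → ℝ) → ℝ → ℝ)
    (hd₀ : Measurable (Function.uncurry d₀)) (hd₁ : Measurable (Function.uncurry d₁))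
    (hd₀r : ∀ x t, d₀ x t ∈ Set.Icc (0 : ℝ) 1)
    (hd₁r : ∀ x t, d₁ x t ∈ Set.Icc (0 : ℝ) 1) :
    (∀ (μ : Measure ℝ), IsProbabilityMeasure μ → Continuous (cdfOf μ) →
      riskBalC μ α d₀ (fun x t => α * d₀ x t +
          (1 - α) * aggEst n x t) -
        riskBalC μ α d₀ (fun x t => α * d₀ x t + (1 - α) * d₁ x t) =
      (1 - α) ^ 2 *
        (riskSqReal μ (aggEst n) -
          riskSqReal μ d₁)) ∧
    ((∀ (μ : Measure ℝ), IsProbabilityMeasure μ → Continuous (cdfOf μ) →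
        riskSqReal μ d₁ ≤
          riskSqReal μ (aggEst n)) →
      (∃ (μ : Measure ℝ), IsProbabilityMeasure μ ∧ Continuous (cdfOf μ) ∧
        riskSqReal μ d₁ <
          riskSqReal μ (aggEst n)) →
      (∀ (μ : Measure ℝ), IsProbabilityMeasure μ → Continuous (cdfOf μ) →
        riskBalC μ α d₀ (fun x t => α * d₀ x t + (1 - α) * d₁ x t) ≤
          riskBalC μ α d₀ (fun x t => α * d₀ x t +
            (1 - α) * aggEst n x t)) ∧
      (∃ (μ : Measure ℝ), IsProbabilityMeasure μ ∧ Continuous (cdfOf μ) ∧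
        riskBalC μ α d₀ (fun x t => α * d₀ x t + (1 - α) * d₁ x t) <
          riskBalC μ α d₀ (fun x t => α * d₀ x t +
            (1 - α) * aggEst n x t))) := by
  have key : ∀ (μ : Measure ℝ), IsProbabilityMeasure μ → Continuous (cdfOf μ) →
      riskBalC μ α d₀ (fun x t => α * d₀ x t + (1 - α) * aggEst n x t) -
        riskBalC μ α d₀ (fun x t => α * d₀ x t + (1 - α) * d₁ x t) =
      (1 - α) ^ 2 * (riskSqReal μ (aggEst n) - riskSqReal μ d₁) := by
    intro μ hμ hFc
    haveI := hμ
    rw [riskBal_eq μ hFc.measurable α d₀ (aggEst n) hd₀ (aggEst_meas n) hd₀r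
        (aggEst_mem_Icc n),
      riskBal_eq μ hFc.measurable α d₀ d₁ hd₀ hd₁ hd₀r hd₁r]
    ring
  refine ⟨key, ?_⟩
  intro hle ⟨μ₀, hμ₀, hF₀, hstrict⟩
  have hβ : (0:ℝ) < (1 - α) ^ 2 := by
    have h1α : (0:ℝ) < 1 - α := by linarith [hα.2]
    positivity
  constructor
  · intro μ hμ hFc
    have h := key μ hμ hFc
    have h2 : 0 ≤ (1 - α) ^ 2 * (riskSqReal μ (aggEst n) - riskSqReal μ d₁) :=
      mul_nonneg hβ.le (sub_nonneg.2 (hle μ hμ hFc))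
    linarith
  · refine ⟨μ₀, hμ₀, hF₀, ?_⟩
    have h := key μ₀ hμ₀ hF₀
    have h2 : 0 < (1 - α) ^ 2 * (riskSqReal μ₀ (aggEst n) - riskSqReal μ₀ d₁) :=
      mul_pos hβ (sub_pos.2 hstrict)
    linarith


end
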